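/- arXiv:1810.08007 — 2 statements merged into one kernel-verified Lean document; each statement's English description precedes it below -/
import Mathlib

section
/- Let N ≥ 1, σ ∈ (0, 1), and C₁, C₂ > 0. Let f : ℝ → ℝ be continuously differentiable and suppose that |f(t) t| ≤ C₁ (1 + t^σ) and 0 ≤ f(t) + f'(t) t ≤ C₂ for all t ≥ 0. Define b : ℝ^N → ℝ^N by b(ξ) := f(|ξ|) ξ. Then: (i) b is monotone, i.e. (b(ξ) − b(η)) · (ξ − η) ≥ 0 for all ξ, η ∈ ℝ^N; (ii) b is globally Lipschitz continuous with Lipschitz constant C₂, i.e. |b(ξ) − b(η)| ≤ C₂ |ξ − η| for all ξ, η ∈ ℝ^N; (iii) |b(ξ)| ≤ C₁ (1 + |ξ|^σ) for all ξ ∈ ℝ^N. -/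
open Set Real

/-- If `f` is `C¹` with `|f(t)t| ≤ C₁(1+t^σ)` and `0 ≤ f(t) + f'(t)t ≤ C₂` for
`t ≥ 0`, then `b(ξ) := f(|ξ|)ξ` is monotone, globally Lipschitz with constant
`C₂`, and satisfies `|b(ξ)| ≤ C₁(1+|ξ|^σ)`. -/
theorem radial_vector_field_properties
    (N : ℕ) (hN : 1 ≤ N) (σ C₁ C₂ : ℝ) (hσ : σ ∈ Set.Ioo (0 : ℝ) 1)
    (hC₁ : 0 < C₁) (hC₂ : 0 < C₂)
    (f : ℝ → ℝ) (hf : ContDiff ℝ 1 f)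
    (hgrowth : ∀ t : ℝ, 0 ≤ t → |f t * t| ≤ C₁ * (1 + t ^ σ))
    (hbound : ∀ t : ℝ, 0 ≤ t → 0 ≤ f t + deriv f t * t ∧ f t + deriv f t * t ≤ C₂)
    (b : EuclideanSpace ℝ (Fin N) → EuclideanSpace ℝ (Fin N))
    (hb : ∀ ξ, b ξ = f ‖ξ‖ • ξ) :
    (∀ ξ η : EuclideanSpace ℝ (Fin N), (0 : ℝ) ≤ inner ℝ (b ξ - b η) (ξ - η)) ∧
    (∀ ξ η : EuclideanSpace ℝ (Fin N), ‖b ξ - b η‖ ≤ C₂ * ‖ξ - η‖) ∧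
    (∀ ξ : EuclideanSpace ℝ (Fin N), ‖b ξ‖ ≤ C₁ * (1 + ‖ξ‖ ^ σ)) := by
  have hfd : Differentiable ℝ f := hf.differentiable one_ne_zero
  -- derivative of g(t) = f t * t
  have hg : ∀ t : ℝ, HasDerivAt (fun t => f t * t) (f t + deriv f t * t) t := by
    intro t
    have h : HasDerivAt (fun t => f t * t) (deriv f t * id t + f t * 1) t :=
      ((hfd t).hasDerivAt).mul (hasDerivAt_id t)
    convert h using 1
    simp [id]; ring
  -- g is monotone on [0, ∞)
  have hgmono : MonotoneOn (fun t => f t * t) (Set.Ici (0:ℝ)) := by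
    apply monotoneOn_of_deriv_nonneg (convex_Ici 0)
    · exact (hf.continuous.mul continuous_id).continuousOn
    · intro t ht
      exact ((hg t).differentiableAt).differentiableWithinAt
    · intro t ht
      rw [interior_Ici] at ht
      rw [(hg t).deriv]
      exact (hbound t ht.le).1
  -- C₂ t - g t is monotone on [0, ∞)
  have hhmono : MonotoneOn (fun t => C₂ * t - f t * t) (Set.Ici (0:ℝ)) := by
    apply monotoneOn_of_deriv_nonneg (convex_Ici 0)
    · exact (continuous_const.mul continuous_id).continuousOn.sub
        (hf.continuous.mul continuous_id).continuousOn
    · intro t ht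
      have hd : HasDerivAt (fun t => C₂ * t - f t * t) (C₂ * 1 - (f t + deriv f t * t)) t :=
        ((hasDerivAt_id t).const_mul C₂).sub (hg t)
      exact hd.differentiableAt.differentiableWithinAt
    · intro t ht
      rw [interior_Ici] at ht
      have hd : HasDerivAt (fun t => C₂ * t - f t * t) (C₂ * 1 - (f t + deriv f t * t)) t :=
        ((hasDerivAt_id t).const_mul C₂).sub (hg t)
      rw [hd.deriv]
      have := (hbound t ht.le).2
      linarith
  have key1 : ∀ r s : ℝ, 0 ≤ s → s ≤ r → f s * s ≤ f r * r := by
    intro r s hs hsr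
    exact hgmono hs (le_trans hs hsr) hsr
  have key2 : ∀ r s : ℝ, 0 ≤ s → s ≤ r → f r * r - f s * s ≤ C₂ * (r - s) := by
    intro r s hs hsr
    have := hhmono hs (le_trans hs hsr) hsr
    simp only at this
    linarith
  -- 0 ≤ f t for t ≥ 0
  have hfnn : ∀ t : ℝ, 0 ≤ t → 0 ≤ f t := by
    intro t ht
    rcases eq_or_lt_of_le ht with h | h
    · have := (hbound 0 le_rfl).1
      simp at this
      rwa [← h]
    · have h1 := key1 t 0 le_rfl ht
      simp at h1
      by_contra hc
      push_neg at hc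
      nlinarith
  -- f t ≤ C₂ for t ≥ 0
  have hfle : ∀ t : ℝ, 0 ≤ t → f t ≤ C₂ := by
    intro t ht
    rcases eq_or_lt_of_le ht with h | h
    · have := (hbound 0 le_rfl).2
      simp at this
      rwa [← h]
    · have h2 := key2 t 0 le_rfl ht
      simp at h2
      by_contra hc
      push_neg at hc
      nlinarith
  -- the "g monotone" product fact, both orders
  have hprod : ∀ r s : ℝ, 0 ≤ r → 0 ≤ s → 0 ≤ (f r * r - f s * s) * (r - s) := by
    intro r s hr hs
    rcases le_total s r with h | h
    · exact mul_nonneg (by linarith [key1 r s hs h]) (by linarith)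
    · nlinarith [key1 s r hr h]
  -- the Lipschitz bound for g, squared
  have hsq : ∀ r s : ℝ, 0 ≤ r → 0 ≤ s →
      (f r * r - f s * s) ^ 2 ≤ C₂ ^ 2 * (r - s) ^ 2 := by
    intro r s hr hs
    rcases le_total s r with h | h
    · have h1 := key1 r s hs h
      have h2 := key2 r s hs h
      nlinarith
    · have h1 := key1 s r hr h
      have h2 := key2 s r hr h
      nlinarith
  refine ⟨?_, ?_, ?_⟩
  · -- monotonicity
    intro ξ η
    rw [hb, hb]
    have hex : (inner ℝ (f ‖ξ‖ • ξ - f ‖η‖ • η) (ξ - η) : ℝ) =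
        f ‖ξ‖ * ‖ξ‖ ^ 2 + f ‖η‖ * ‖η‖ ^ 2 - (f ‖ξ‖ + f ‖η‖) * inner ℝ ξ η := by
      simp only [inner_sub_left, inner_sub_right, real_inner_smul_left,
        real_inner_self_eq_norm_sq, real_inner_comm η ξ]
      ring
    rw [hex]
    have hc : (inner ℝ ξ η : ℝ) ≤ ‖ξ‖ * ‖η‖ := real_inner_le_norm ξ η
    have hA := hprod ‖ξ‖ ‖η‖ (norm_nonneg ξ) (norm_nonneg η)
    have hB : 0 ≤ (f ‖ξ‖ + f ‖η‖) * (‖ξ‖ * ‖η‖ - inner ℝ ξ η) :=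
      mul_nonneg (by linarith [hfnn ‖ξ‖ (norm_nonneg ξ), hfnn ‖η‖ (norm_nonneg η)])
        (by linarith)
    nlinarith [hA, hB]
  · -- Lipschitz
    intro ξ η
    have hns : 0 ≤ C₂ * ‖ξ - η‖ := mul_nonneg hC₂.le (norm_nonneg _)
    refine le_of_pow_le_pow_left₀ two_ne_zero hns ?_
    rw [hb, hb]
    have e1 : ‖f ‖ξ‖ • ξ - f ‖η‖ • η‖ ^ 2 =
        (f ‖ξ‖) ^ 2 * ‖ξ‖ ^ 2 + (f ‖η‖) ^ 2 * ‖η‖ ^ 2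
          - 2 * (f ‖ξ‖ * f ‖η‖) * inner ℝ ξ η := by
      rw [← real_inner_self_eq_norm_sq]
      simp only [inner_sub_left, inner_sub_right, real_inner_smul_left,
        real_inner_smul_right, real_inner_self_eq_norm_sq, real_inner_comm η ξ,
        norm_smul, Real.norm_eq_abs, mul_pow, sq_abs]
      ring
    have e2 : ‖ξ - η‖ ^ 2 = ‖ξ‖ ^ 2 - 2 * inner ℝ ξ η + ‖η‖ ^ 2 :=
      norm_sub_sq_real ξ η
    rw [mul_pow, e1, e2]
    have hc : (inner ℝ ξ η : ℝ) ≤ ‖ξ‖ * ‖η‖ := real_inner_le_norm ξ η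
    have hf1 := hfnn ‖ξ‖ (norm_nonneg ξ)
    have hf2 := hfnn ‖η‖ (norm_nonneg η)
    have hf3 := hfle ‖ξ‖ (norm_nonneg ξ)
    have hf4 := hfle ‖η‖ (norm_nonneg η)
    have hcs : f ‖ξ‖ * f ‖η‖ ≤ C₂ ^ 2 := by nlinarith
    have hB : 0 ≤ (C₂ ^ 2 - f ‖ξ‖ * f ‖η‖) * (‖ξ‖ * ‖η‖ - inner ℝ ξ η) :=
      mul_nonneg (by linarith) (by linarith)
    have h3 := hsq ‖ξ‖ ‖η‖ (norm_nonneg ξ) (norm_nonneg η)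
    nlinarith [hB, h3]
  · -- growth
    intro ξ
    rw [hb, norm_smul]
    have : ‖f ‖ξ‖‖ * ‖ξ‖ = |f ‖ξ‖ * ‖ξ‖| := by
      rw [abs_mul, Real.norm_eq_abs, abs_of_nonneg (norm_nonneg ξ)]
    rw [this]
    exact hgrowth ‖ξ‖ (norm_nonneg ξ)
end

section
/- Define f₁, f₂ : ℝ → ℝ by f₁(ψ) := ((−1 + √(1 + 2ψ))/√(1 + 2ψ)) for ψ ≥ 0 and f₁(ψ) := ((1 − √(1 − 2ψ))/√(1 − 2ψ)) for ψ < 0, and f₂(ψ) := 1/√(1 + 2|ψ|). Then f₁ and f₂ are globally Lipschitz continuous on ℝ with Lipschitz constant 1. -/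
open Set Real

lemma aux_one_le (t : ℝ) (ht : 0 ≤ t) : 1 ≤ Real.sqrt (1 + 2*t) := by
  have h := Real.sqrt_le_sqrt (show (1:ℝ) ≤ 1 + 2*t by linarith)
  simpa using h

lemma aux_sq (t : ℝ) (ht : 0 ≤ t) : (Real.sqrt (1 + 2*t))^2 = 1 + 2*t :=
  Real.sq_sqrt (by linarith)

lemma h_nonneg (t : ℝ) (ht : 0 ≤ t) : 0 ≤ 1 - 1 / Real.sqrt (1 + 2*t) := by
  have h1 := aux_one_le t ht
  have : 1 / Real.sqrt (1 + 2*t) ≤ 1 := by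
    rw [div_le_one (by linarith)]; exact h1
  linarith

lemma h_le (t : ℝ) (ht : 0 ≤ t) : 1 - 1 / Real.sqrt (1 + 2*t) ≤ t := by
  have h1 := aux_one_le t ht
  have hs := aux_sq t ht
  set s := Real.sqrt (1 + 2*t)
  have hspos : (0:ℝ) < s := by linarith
  rw [sub_le_iff_le_add, ← sub_le_iff_le_add', le_div_iff₀ hspos]
  nlinarith [sq_nonneg (s - 1), mul_nonneg ht (by linarith : (0:ℝ) ≤ s - 1)]

lemma h_lip (a b : ℝ) (ha : 0 ≤ a) (hb : 0 ≤ b) (hab : a ≤ b) :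
    1 / Real.sqrt (1 + 2*a) - 1 / Real.sqrt (1 + 2*b) ≤ b - a := by
  have h1a := aux_one_le a ha
  have h1b := aux_one_le b hb
  have hsa := aux_sq a ha
  have hsb := aux_sq b hb
  set sa := Real.sqrt (1 + 2*a)
  set sb := Real.sqrt (1 + 2*b)
  have hpa : (0:ℝ) < sa := by linarith
  have hpb : (0:ℝ) < sb := by linarith
  have hle : sa ≤ sb := Real.sqrt_le_sqrt (by linarith)
  have h1 : sb - sa ≤ b - a := by
    nlinarith [mul_nonneg (by linarith : (0:ℝ) ≤ sb - sa) (by linarith : (0:ℝ) ≤ sa + sb - 2)]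
  have h2 : 1 / sa - 1 / sb = (sb - sa) / (sa * sb) := by
    field_simp
  rw [h2]
  calc (sb - sa) / (sa * sb) ≤ sb - sa :=
        div_le_self (by linarith) (by nlinarith)
    _ ≤ b - a := h1

lemma h_mono (a b : ℝ) (ha : 0 ≤ a) (hb : 0 ≤ b) (hab : a ≤ b) :
    1 / Real.sqrt (1 + 2*b) ≤ 1 / Real.sqrt (1 + 2*a) := by
  have h1a := aux_one_le a ha
  apply one_div_le_one_div_of_le (by linarith)
  exact Real.sqrt_le_sqrt (by linarith)

lemma h_lip_abs (a b : ℝ) (ha : 0 ≤ a) (hb : 0 ≤ b) :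
    |(1 - 1 / Real.sqrt (1 + 2*a)) - (1 - 1 / Real.sqrt (1 + 2*b))| ≤ |a - b| := by
  rcases le_total a b with h | h
  · rw [abs_of_nonpos (by linarith [h_mono a b ha hb h]), abs_of_nonpos (by linarith)]
    linarith [h_lip a b ha hb h]
  · rw [abs_of_nonneg (by linarith [h_mono b a hb ha h]), abs_of_nonneg (by linarith)]
    linarith [h_lip b a hb ha h]

/-- The functions `f₁` and `f₂` appearing in the relaxed optimality system are
globally Lipschitz continuous with Lipschitz constant `1`. -/
theorem f1_f2_globally_lipschitz
    (f₁ f₂ : ℝ → ℝ)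
    (hf₁ : ∀ ψ : ℝ, f₁ ψ = if 0 ≤ ψ
      then (-1 + Real.sqrt (1 + 2 * ψ)) / Real.sqrt (1 + 2 * ψ)
      else (1 - Real.sqrt (1 - 2 * ψ)) / Real.sqrt (1 - 2 * ψ))
    (hf₂ : ∀ ψ : ℝ, f₂ ψ = 1 / Real.sqrt (1 + 2 * |ψ|)) :
    (∀ ψ₁ ψ₂ : ℝ, |f₁ ψ₁ - f₁ ψ₂| ≤ 1 * |ψ₁ - ψ₂|) ∧
    (∀ ψ₁ ψ₂ : ℝ, |f₂ ψ₁ - f₂ ψ₂| ≤ 1 * |ψ₁ - ψ₂|) := by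
  have hf₁' : ∀ ψ : ℝ, f₁ ψ = if 0 ≤ ψ
      then 1 - 1 / Real.sqrt (1 + 2 * ψ)
      else -(1 - 1 / Real.sqrt (1 + 2 * (-ψ))) := by
    intro ψ
    rw [hf₁ ψ]
    by_cases hψ : 0 ≤ ψ
    · simp only [if_pos hψ]
      have h1 := aux_one_le ψ hψ
      set s := Real.sqrt (1 + 2*ψ)
      have hpos : (0:ℝ) < s := by linarith
      field_simp
      ring
    · simp only [if_neg hψ]
      push_neg at hψ
      rw [show (1:ℝ) - 2 * ψ = 1 + 2*(-ψ) by ring]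
      have h1 := aux_one_le (-ψ) (by linarith)
      set s := Real.sqrt (1 + 2*(-ψ))
      have hpos : (0:ℝ) < s := by linarith
      field_simp
      ring
  constructor
  · intro a b
    rw [hf₁' a, hf₁' b, one_mul]
    by_cases ha : 0 ≤ a <;> by_cases hb : 0 ≤ b
    · simp only [if_pos ha, if_pos hb]
      exact h_lip_abs a b ha hb
    · simp only [if_pos ha, if_neg hb]
      push_neg at hb
      have hna := h_nonneg a ha
      have hnb := h_nonneg (-b) (by linarith : (0:ℝ) ≤ -b)
      have hla := h_le a ha
      have hlb := h_le (-b) (by linarith : (0:ℝ) ≤ -b)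
      rw [abs_of_nonneg (by linarith), abs_of_nonneg (by linarith)]
      linarith
    · simp only [if_neg ha, if_pos hb]
      push_neg at ha
      have hna := h_nonneg (-a) (by linarith : (0:ℝ) ≤ -a)
      have hnb := h_nonneg b hb
      have hla := h_le (-a) (by linarith : (0:ℝ) ≤ -a)
      have hlb := h_le b hb
      rw [abs_of_nonpos (by linarith), abs_of_nonpos (by linarith)]
      linarith
    · simp only [if_neg ha, if_neg hb]
      push_neg at ha hb
      have h := h_lip_abs (-a) (-b) (by linarith) (by linarith)
      rw [show -(1 - 1 / Real.sqrt (1 + 2 * -a)) - -(1 - 1 / Real.sqrt (1 + 2 * -b))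
          = -((1 - 1 / Real.sqrt (1 + 2 * -a)) - (1 - 1 / Real.sqrt (1 + 2 * -b))) by ring,
        abs_neg]
      calc |(1 - 1 / Real.sqrt (1 + 2 * -a)) - (1 - 1 / Real.sqrt (1 + 2 * -b))|
          ≤ |(-a) - (-b)| := h
        _ = |a - b| := by rw [show (-a) - (-b) = -(a-b) by ring, abs_neg]
  · intro a b
    rw [hf₂ a, hf₂ b, one_mul]
    have h := h_lip_abs |a| |b| (abs_nonneg a) (abs_nonneg b)
    have h2 : |1 / Real.sqrt (1 + 2 * |a|) - 1 / Real.sqrt (1 + 2 * |b|)| ≤ abs (|a| - |b|) := by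
      rw [show 1 / Real.sqrt (1 + 2 * |a|) - 1 / Real.sqrt (1 + 2 * |b|)
          = -((1 - 1 / Real.sqrt (1 + 2*|a|)) - (1 - 1 / Real.sqrt (1 + 2*|b|))) by ring, abs_neg]
      exact h
    exact h2.trans (abs_abs_sub_abs_le_abs_sub a b)
end
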